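/- Let n = 2^r · m be a positive integer with m odd, and for a positive integer t set ε(t) = 1 if t is odd and ε(t) = 2 if t is even. Then the minimum of Σ_i ε(t_i)·t_i over all finite tuples (t_1, ..., t_ℓ) of positive integers satisfying lcm(2^r, t_1, ..., t_ℓ) = n equals Σ_{p odd prime, p ∣ n} p^{v_p(n)}; in particular, this minimum is attained by taking the t_i to be the odd prime-power components p^{v_p(n)} of n. -/

import Mathlib

/-- The weight `ε(t)`: `1` if `t` is odd and `2` if `t` is even. -/
def epsWeight (t : ℕ) : ℕ := if Odd t then 1 else 2


lemma foldr_lcm_ne_zero (b : ℕ) (hb : b ≠ 0) (l : List ℕ) (hl : ∀ t ∈ l, 0 < t) :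
    l.foldr Nat.lcm b ≠ 0 := by
  induction l with
  | nil => exact hb
  | cons t l ih =>
      exact Nat.lcm_ne_zero (hl t (List.mem_cons_self)).ne'
        (ih fun x hx => hl x (List.mem_cons_of_mem _ hx))

lemma foldr_lcm_dvd (b N : ℕ) (hb : b ∣ N) (l : List ℕ) (hl : ∀ t ∈ l, t ∣ N) :
    l.foldr Nat.lcm b ∣ N := by
  induction l with
  | nil => exact hb
  | cons t l ih =>
      exact Nat.lcm_dvd (hl t (List.mem_cons_self))
        (ih fun x hx => hl x (List.mem_cons_of_mem _ hx))

lemma base_dvd_foldr_lcm (b : ℕ) (l : List ℕ) : b ∣ l.foldr Nat.lcm b := by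
  induction l with
  | nil => exact dvd_rfl
  | cons t l ih => exact ih.trans (Nat.dvd_lcm_right _ _)

lemma mem_dvd_foldr_lcm (b : ℕ) (l : List ℕ) (t : ℕ) (ht : t ∈ l) :
    t ∣ l.foldr Nat.lcm b := by
  induction l with
  | nil => simp at ht
  | cons s l ih =>
      rcases List.mem_cons.1 ht with h | h
      · exact h ▸ Nat.dvd_lcm_left _ _
      · exact (ih h).trans (Nat.dvd_lcm_right _ _)

lemma sum_le_prod_of_two_le (s : Finset ℕ) (f : ℕ → ℕ) (hf : ∀ i ∈ s, 2 ≤ f i) :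
    ∑ i ∈ s, f i ≤ ∏ i ∈ s, f i := by
  induction s using Finset.induction with
  | empty => simp
  | @insert a s ha ih =>
      rw [Finset.sum_insert ha, Finset.prod_insert ha]
      have hfa : 2 ≤ f a := hf a (Finset.mem_insert_self a s)
      have hs : ∑ i ∈ s, f i ≤ ∏ i ∈ s, f i := ih fun i hi => hf i (Finset.mem_insert_of_mem hi)
      rcases s.eq_empty_or_nonempty with rfl | ⟨x, hx⟩
      · simp
      · have h2 : 2 ≤ ∑ i ∈ s, f i :=
          le_trans (hf x (Finset.mem_insert_of_mem hx)) (Finset.single_le_sum (fun i _ => Nat.zero_le _) hx)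
        calc f a + ∑ i ∈ s, f i ≤ f a * ∑ i ∈ s, f i := by nlinarith
        _ ≤ f a * ∏ i ∈ s, f i := Nat.mul_le_mul_left _ hs

lemma prod_primeFactors_pow (t : ℕ) (ht : t ≠ 0) :
    ∏ p ∈ t.primeFactors, p ^ t.factorization p = t := by
  conv_rhs => rw [← Nat.factorization_prod_pow_eq_self ht]
  rw [Finsupp.prod, Nat.support_factorization]

lemma sum_primePow_le (t : ℕ) (ht : 0 < t) (S : Finset ℕ)
    (hP : ∀ p ∈ S, p.Prime) (hE : ∀ p ∈ S, 1 ≤ t.factorization p) :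
    ∑ p ∈ S, p ^ t.factorization p ≤ epsWeight t * t := by
  set A := S.filter (· ≠ 2) with hA
  have hA_sub : A ⊆ t.primeFactors := by
    intro p hp
    rw [← Nat.support_factorization, Finsupp.mem_support_iff]
    exact Nat.one_le_iff_ne_zero.1 (hE p (Finset.mem_filter.1 hp).1)
  have hprod : ∏ p ∈ A, p ^ t.factorization p ∣ t := by
    conv_rhs => rw [← prod_primeFactors_pow t ht.ne']
    exact Finset.prod_dvd_prod_of_subset _ _ _ hA_sub
  have hsumA : ∑ p ∈ A, p ^ t.factorization p ≤ t := by
    refine le_trans (sum_le_prod_of_two_le _ _ fun p hp => ?_) (Nat.le_of_dvd ht hprod)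
    have hp' := hP p (Finset.mem_filter.1 hp).1
    exact le_trans hp'.two_le (Nat.le_self_pow (Nat.one_le_iff_ne_zero.1 (hE p (Finset.mem_filter.1 hp).1)) p)
  have hsplit : ∑ p ∈ S, p ^ t.factorization p =
      (∑ p ∈ S.filter (· = 2), p ^ t.factorization p) + ∑ p ∈ A, p ^ t.factorization p := by
    rw [hA, ← Finset.sum_filter_add_sum_filter_not S (· = 2)]
  by_cases h2 : 2 ∈ S
  · have h2t : 2 ∣ t := Nat.dvd_of_factorization_pos (Nat.one_le_iff_ne_zero.1 (hE 2 h2))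
    have heps : epsWeight t = 2 := by
      simp [epsWeight, Nat.odd_iff, Nat.two_dvd_ne_zero.1, (Nat.even_iff.1 (even_iff_two_dvd.2 h2t))]
    have hf2 : S.filter (· = 2) = {2} := by
      simp [Finset.filter_eq', h2]
    have h2le : (2:ℕ) ^ t.factorization 2 ≤ t :=
      Nat.le_of_dvd ht (Nat.ordProj_dvd t 2)
    rw [hsplit, hf2, Finset.sum_singleton, heps, two_mul]
    exact Nat.add_le_add h2le hsumA
  · have hf2 : S.filter (· = 2) = ∅ := by
      ext a
      simp only [Finset.mem_filter, Finset.notMem_empty, iff_false, not_and]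
      rintro ha rfl
      exact h2 ha
    rw [hsplit, hf2, Finset.sum_empty, zero_add]
    calc ∑ p ∈ A, p ^ t.factorization p ≤ t := hsumA
    _ ≤ epsWeight t * t := Nat.le_mul_of_pos_left t (by unfold epsWeight; split <;> norm_num)

lemma key_lower (b : ℕ) (hb : b ≠ 0) (l : List ℕ) (hl : ∀ t ∈ l, 0 < t) :
    ∑ p ∈ (l.foldr Nat.lcm b).primeFactors.filter (fun p => ¬ p ∣ b),
      p ^ (l.foldr Nat.lcm b).factorization p ≤ (l.map fun t => epsWeight t * t).sum := by
  induction l with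
  | nil =>
      simp only [List.foldr_nil, List.map_nil, List.sum_nil, Nat.le_zero]
      rw [Finset.sum_eq_zero]
      intro p hp
      exact absurd (Nat.dvd_of_mem_primeFactors (Finset.mem_filter.1 hp).1)
        (Finset.mem_filter.1 hp).2
  | cons t l ih =>
      have ht : t ≠ 0 := (hl t (List.mem_cons_self)).ne'
      have hl' : ∀ x ∈ l, 0 < x := fun x hx => hl x (List.mem_cons_of_mem _ hx)
      set L' := l.foldr Nat.lcm b with hL'def
      have hL' : L' ≠ 0 := foldr_lcm_ne_zero b hb l hl'
      have hfold : (t :: l).foldr Nat.lcm b = Nat.lcm t L' := rfl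
      set L := Nat.lcm t L' with hLdef
      have hL : L ≠ 0 := Nat.lcm_ne_zero ht hL'
      have hfac : ∀ p, L.factorization p = max (t.factorization p) (L'.factorization p) := by
        intro p
        rw [hLdef, Nat.factorization_lcm ht hL', Finsupp.sup_apply]
      have hmem : ∀ (N : ℕ), ∀ p, p ∈ N.primeFactors ↔ N.factorization p ≠ 0 := by
        intro N p
        rw [← Nat.support_factorization, Finsupp.mem_support_iff]
      rw [hfold, List.map_cons, List.sum_cons]
      set S := L.primeFactors.filter (fun p => ¬ p ∣ b) with hSdef
      rw [← Finset.sum_filter_add_sum_filter_not S (fun p => L'.factorization p ≤ t.factorization p)]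
      have h1 : ∑ p ∈ S.filter (fun p => L'.factorization p ≤ t.factorization p),
          p ^ L.factorization p ≤ epsWeight t * t := by
        have he : ∀ p ∈ S.filter (fun p => L'.factorization p ≤ t.factorization p),
            L.factorization p = t.factorization p := by
          intro p hp
          rw [hfac p, max_eq_left (Finset.mem_filter.1 hp).2]
        rw [Finset.sum_congr rfl fun p hp => by rw [he p hp]]
        apply sum_primePow_le t (Nat.pos_of_ne_zero ht)
        · intro p hp
          exact Nat.prime_of_mem_primeFactors (Finset.mem_filter.1 (Finset.mem_filter.1 hp).1).1
        · intro p hp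
          have := (hmem L p).1 (Finset.mem_filter.1 (Finset.mem_filter.1 hp).1).1
          rw [← he p hp]
          omega
      have h2 : ∑ p ∈ S.filter (fun p => ¬ L'.factorization p ≤ t.factorization p),
          p ^ L.factorization p ≤ (l.map fun t => epsWeight t * t).sum := by
        refine le_trans ?_ (ih hl')
        have he : ∀ p ∈ S.filter (fun p => ¬ L'.factorization p ≤ t.factorization p),
            L.factorization p = L'.factorization p := by
          intro p hp
          rw [hfac p, max_eq_right (le_of_not_ge (Finset.mem_filter.1 hp).2)]
        rw [Finset.sum_congr rfl fun p hp => by rw [he p hp]]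
        apply Finset.sum_le_sum_of_subset
        intro p hp
        obtain ⟨hpS, hple⟩ := Finset.mem_filter.1 hp
        obtain ⟨hpL, hpb⟩ := Finset.mem_filter.1 hpS
        refine Finset.mem_filter.2 ⟨(hmem L' p).2 ?_, hpb⟩
        omega
      omega

theorem stmt_18 (r m n : ℕ) (hm : Odd m) (hn : n = 2 ^ r * m) :
    IsLeast
      {s : ℕ | ∃ l : List ℕ, (∀ t ∈ l, 0 < t) ∧
        l.foldr Nat.lcm (2 ^ r) = n ∧
        s = (l.map fun t => epsWeight t * t).sum}
      (∑ p ∈ n.primeFactors.filter (fun p => p ≠ 2), p ^ n.factorization p) := by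
  have hm0 : m ≠ 0 := by rintro rfl; simp [Nat.odd_iff] at hm
  have hn0 : n ≠ 0 := by rw [hn]; positivity
  have hb0 : (2:ℕ) ^ r ≠ 0 := by positivity
  have hbdvd : (2:ℕ) ^ r ∣ n := hn ▸ dvd_mul_right _ _
  -- the filter over prime factors with ¬ p ∣ 2^r equals the filter with p ≠ 2
  have hfilter : n.primeFactors.filter (fun p => ¬ p ∣ 2 ^ r)
      = n.primeFactors.filter (fun p => p ≠ 2) := by
    apply Finset.filter_congr
    intro p hp
    have hprime := Nat.prime_of_mem_primeFactors hp
    constructor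
    · rintro h rfl
      rcases (Nat.Prime.dvd_mul Nat.prime_two).1 (hn ▸ Nat.dvd_of_mem_primeFactors hp) with h' | h'
      · exact h h'
      · rw [Nat.odd_iff] at hm; omega
    · intro hne hdvd
      exact hne ((Nat.prime_dvd_prime_iff_eq hprime Nat.prime_two).1 (hprime.dvd_of_dvd_pow hdvd))
  constructor
  · -- membership
    set F := n.primeFactors.filter (fun p => p ≠ 2) with hF
    refine ⟨F.toList.map (fun p => p ^ n.factorization p), ?_, ?_, ?_⟩
    · intro t ht
      obtain ⟨p, hp, rfl⟩ := List.mem_map.1 ht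
      have : p.Prime := Nat.prime_of_mem_primeFactors
        (Finset.mem_filter.1 (Finset.mem_toList.1 hp)).1
      exact pow_pos this.pos _
    · apply Nat.dvd_antisymm
      · apply foldr_lcm_dvd _ _ hbdvd
        intro t ht
        obtain ⟨p, hp, rfl⟩ := List.mem_map.1 ht
        exact Nat.ordProj_dvd n p
      · have hfold0 : (F.toList.map fun p => p ^ n.factorization p).foldr Nat.lcm (2 ^ r) ≠ 0 := by
          apply foldr_lcm_ne_zero _ hb0
          intro t ht
          obtain ⟨p, hp, rfl⟩ := List.mem_map.1 ht
          have : p.Prime := Nat.prime_of_mem_primeFactors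
            (Finset.mem_filter.1 (Finset.mem_toList.1 hp)).1
          exact pow_pos this.pos _
        rw [← Nat.factorization_le_iff_dvd hn0 hfold0]
        intro p
        by_cases hp0 : n.factorization p = 0
        · simp [hp0]
        have hpmem : p ∈ n.primeFactors := by
          rw [← Nat.support_factorization, Finsupp.mem_support_iff]; exact hp0
        have hprime := Nat.prime_of_mem_primeFactors hpmem
        by_cases hp2 : p = 2
        · subst hp2
          have hv2 : n.factorization 2 = r := by
            rw [hn, Nat.factorization_mul hb0 hm0, Finsupp.add_apply,
              Nat.Prime.factorization_pow Nat.prime_two, Finsupp.single_eq_same,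
              Nat.factorization_eq_zero_of_not_dvd (by
                intro h; rw [Nat.odd_iff] at hm; omega)]
            omega
          rw [hv2]
          exact (Nat.Prime.pow_dvd_iff_le_factorization Nat.prime_two hfold0).1
            (base_dvd_foldr_lcm _ _)
        · have hmeml : p ^ n.factorization p ∈ F.toList.map fun p => p ^ n.factorization p :=
            List.mem_map.2 ⟨p, Finset.mem_toList.2 (Finset.mem_filter.2 ⟨hpmem, hp2⟩), rfl⟩
          exact (Nat.Prime.pow_dvd_iff_le_factorization hprime hfold0).1
            (mem_dvd_foldr_lcm _ _ _ hmeml)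
    · rw [List.map_map, Finset.sum_map_toList]
      apply Finset.sum_congr rfl
      intro p hp
      have hp' := Finset.mem_filter.1 hp
      have hodd : Odd (p ^ n.factorization p) :=
        Odd.pow ((Nat.prime_of_mem_primeFactors hp'.1).odd_of_ne_two hp'.2)
      simp [epsWeight, hodd]
  · -- lower bound
    rintro s ⟨l, hpos, hfold, rfl⟩
    calc ∑ p ∈ n.primeFactors.filter (fun p => p ≠ 2), p ^ n.factorization p
        = ∑ p ∈ (l.foldr Nat.lcm (2^r)).primeFactors.filter (fun p => ¬ p ∣ 2^r),
            p ^ (l.foldr Nat.lcm (2^r)).factorization p := by rw [hfold, hfilter]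
      _ ≤ _ := key_lower _ hb0 l hpos
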